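/- Let G be a finite group, p a prime, and S a Sylow p-subgroup of G. The cohomological restriction map H^2(G,U(1)) → H^2(S,U(1)) maps Br^2(G) into Br^2(S), and its restriction to the p-primary component of Br^2(G) is injective; that is, the p-part of Br^2(G) embeds into Br^2(S). -/

import Mathlib

namespace DT

variable {G : Type*} [Group G]

/-- The (inhomogeneous bar) 2-cocycle identity for a `U(1)`-valued 2-cochain, written
multiplicatively: `ω(g₂,g₃)·ω(g₁,g₂g₃) = ω(g₁g₂,g₃)·ω(g₁,g₂)`. -/
def IsCocycle2 (ω : G → G → Circle) : Prop :=
  ∀ g₁ g₂ g₃ : G, ω g₂ g₃ * ω g₁ (g₂ * g₃) = ω (g₁ * g₂) g₃ * ω g₁ g₂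

/-- A `U(1)`-valued 2-coboundary: `ω(g₁,g₂) = α(g₂)·α(g₁g₂)⁻¹·α(g₁)`. -/
def IsCoboundary2 (ω : G → G → Circle) : Prop :=
  ∃ α : G → Circle, ∀ g₁ g₂ : G, ω g₁ g₂ = α g₂ * (α (g₁ * g₂))⁻¹ * α g₁

/-- A 2-cochain is untwisted if `ω(g,h) = ω(h,g)` for all commuting pairs. -/
def Untwisted2 (ω : G → G → Circle) : Prop :=
  ∀ g h : G, g * h = h * g → ω g h = ω h g

end DT

namespace DT

variable (G : Type*) [Group G]

/-- The 2-cocycles, as a subgroup of the group of `U(1)`-valued 2-cochains. -/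
noncomputable def cocycles2Sub : Subgroup (G → G → Circle) where
  carrier := {ω | IsCocycle2 ω}
  one_mem' := by intro g₁ g₂ g₃; simp
  mul_mem' := by
    intro ω ω' h h' g₁ g₂ g₃
    simp only [Pi.mul_apply]
    rw [mul_mul_mul_comm, h g₁ g₂ g₃, h' g₁ g₂ g₃, mul_mul_mul_comm]
  inv_mem' := by
    intro ω h g₁ g₂ g₃
    simp only [Pi.inv_apply, ← mul_inv]
    rw [h g₁ g₂ g₃]

/-- The 2-coboundary map `α ↦ δα`, `(δα)(g₁,g₂) = α(g₂)·α(g₁g₂)⁻¹·α(g₁)`. -/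
noncomputable def d1hom : (G → Circle) →* (G → G → Circle) where
  toFun α := fun g₁ g₂ => α g₂ * (α (g₁ * g₂))⁻¹ * α g₁
  map_one' := by funext g₁ g₂; simp
  map_mul' := by
    intro α β
    funext g₁ g₂
    simp only [Pi.mul_apply, mul_inv]
    group
    simp [mul_comm, mul_left_comm, mul_assoc]

/-- The 2-coboundaries, as a subgroup of the 2-cochains. -/
noncomputable def coboundaries2Sub : Subgroup (G → G → Circle) := (d1hom G).range

/-- The untwisted 2-cocycles. -/
noncomputable def untwisted2Sub : Subgroup (G → G → Circle) where
  carrier := {ω | IsCocycle2 ω ∧ Untwisted2 ω}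
  one_mem' := ⟨(cocycles2Sub G).one_mem, by intro g h _; rfl⟩
  mul_mem' := by
    intro ω ω' h h'
    exact ⟨(cocycles2Sub G).mul_mem h.1 h'.1, by
      intro g k hgk
      simp only [Pi.mul_apply, h.2 g k hgk, h'.2 g k hgk]⟩
  inv_mem' := by
    intro ω h
    exact ⟨(cocycles2Sub G).inv_mem h.1, by
      intro g k hgk
      simp only [Pi.inv_apply, h.2 g k hgk]⟩

/-- `H²(G,U(1))`: 2-cocycles modulo 2-coboundaries. -/
def H2Grp := cocycles2Sub G ⧸ ((coboundaries2Sub G).subgroupOf (cocycles2Sub G))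

noncomputable instance : CommGroup (H2Grp G) := by unfold H2Grp; infer_instance

/-- `Br²(G)`: the subgroup of `H²(G,U(1))` of classes of untwisted cocycles. -/
noncomputable def Br2Sub : Subgroup (H2Grp G) :=
  Subgroup.map (QuotientGroup.mk' ((coboundaries2Sub G).subgroupOf (cocycles2Sub G)))
    ((untwisted2Sub G).subgroupOf (cocycles2Sub G))

variable {G}
variable {K : Type*} [Group K]

/-- Restriction of 2-cocycles along a group homomorphism. -/
noncomputable def res2Cocycle (f : K →* G) : cocycles2Sub G →* cocycles2Sub K where
  toFun ω := ⟨fun a b => (ω : G → G → Circle) (f a) (f b), by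
    intro a b c
    simpa [map_mul] using ω.2 (f a) (f b) (f c)⟩
  map_one' := rfl
  map_mul' := fun _ _ => rfl

/-- The restriction map `H²(G,U(1)) →* H²(K,U(1))` induced by `f : K →* G`. -/
noncomputable def res2 (f : K →* G) : H2Grp G →* H2Grp K :=
  QuotientGroup.lift _
    ((QuotientGroup.mk' ((coboundaries2Sub K).subgroupOf (cocycles2Sub K))).comp
      (res2Cocycle f))
    (by
      intro ω hω
      obtain ⟨α, hα⟩ := MonoidHom.mem_range.mp (Subgroup.mem_subgroupOf.mp hω)
      have hmem : res2Cocycle f ω ∈ (coboundaries2Sub K).subgroupOf (cocycles2Sub K) := by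
        rw [Subgroup.mem_subgroupOf]
        refine MonoidHom.mem_range.mpr ⟨α ∘ f, ?_⟩
        funext a b
        have h2 := congrFun (congrFun hα (f a)) (f b)
        simpa [d1hom, res2Cocycle, map_mul] using h2
      exact (QuotientGroup.eq_one_iff _).mpr hmem)

end DT


section StmtAux

open DT

/-- Complex-number core of the per-coset computation. -/
private lemma circle_aux {gh ghr r'us r''vs hr vu r''w gr' A B αu αv αw : Circle}
    (h1 : hr * A = ghr * gh) (h2 : r'us * A = B * gr')
    (h3 : vu * r''w = B * r''vs) (h4 : vu = αu * αw⁻¹ * αv) :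
    gh = (αu * hr * r'us⁻¹) * (αw * ghr * r''w⁻¹)⁻¹ * (αv * gr' * r''vs⁻¹) := by
  have h4' : vu * αw = αu * αv := by rw [h4, mul_right_comm, inv_mul_cancel_right]
  have L : gh * (r'us * αw * ghr * r''vs) = αu * hr * (αv * (gr' * r''w)) := by
    have c1 : ((hr * A : Circle) : ℂ) = ((ghr * gh : Circle) : ℂ) := congrArg _ h1
    have c2 : ((r'us * A : Circle) : ℂ) = ((B * gr' : Circle) : ℂ) := congrArg _ h2
    have c3 : ((vu * r''w : Circle) : ℂ) = ((B * r''vs : Circle) : ℂ) := congrArg _ h3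
    have c4 : ((vu * αw : Circle) : ℂ) = ((αu * αv : Circle) : ℂ) := congrArg _ h4'
    push_cast at c1 c2 c3 c4
    rw [← Circle.coe_inj]
    push_cast
    linear_combination (-((r'us : ℂ) * (r''vs : ℂ) * (αw : ℂ))) * c1 +
      ((hr : ℂ) * (r''vs : ℂ) * (αw : ℂ)) * c2 +
      (-((hr : ℂ) * (gr' : ℂ) * (αw : ℂ))) * c3 +
      ((hr : ℂ) * (r''w : ℂ) * (gr' : ℂ)) * c4
  calc gh = gh * (r'us * αw * ghr * r''vs) * (r'us * αw * ghr * r''vs)⁻¹ := by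
        rw [mul_inv_cancel_right]
    _ = (αu * hr * (αv * (gr' * r''w))) * (r'us * αw * ghr * r''vs)⁻¹ := by rw [L]
    _ = (αu * hr * r'us⁻¹) * (αw * ghr * r''w⁻¹)⁻¹ * (αv * gr' * r''vs⁻¹) := by
        simp only [mul_inv, inv_inv]
        rw [← Circle.coe_inj]
        push_cast
        ring

variable {G : Type*} [Group G]

/-- The `S`-component of `g • (coset rep)` relative to chosen coset representatives. -/
private noncomputable def Tfun (S : Subgroup G) (g : G) (q : G ⧸ S) : S :=
  ⟨((g • q).out)⁻¹ * (g * q.out), by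
    apply QuotientGroup.eq.mp
    rw [QuotientGroup.out_eq']
    calc g • q = g • (QuotientGroup.mk q.out : G ⧸ S) := by rw [QuotientGroup.out_eq']
      _ = QuotientGroup.mk (g * q.out) := rfl⟩

private lemma Tfun_coe (S : Subgroup G) (g : G) (q : G ⧸ S) :
    (Tfun S g q : G) = ((g • q).out)⁻¹ * (g * q.out) := rfl

private lemma Tfun_spec (S : Subgroup G) (g : G) (q : G ⧸ S) :
    g * q.out = (g • q).out * (Tfun S g q : G) := by
  rw [Tfun_coe, mul_inv_cancel_left]

private lemma Tfun_mul (S : Subgroup G) (g h : G) (q : G ⧸ S) :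
    Tfun S (g * h) q = Tfun S g (h • q) * Tfun S h q := by
  apply Subtype.ext
  rw [Subgroup.coe_mul, Tfun_coe, Tfun_coe, Tfun_coe, mul_smul]
  group

/-- The per-coset factor of the transfer coboundary. -/
private noncomputable def Ffun (S : Subgroup G) (ω : G → G → Circle) (α : S → Circle)
    (g : G) (q : G ⧸ S) : Circle :=
  α (Tfun S g q) * ω g q.out * (ω ((g • q).out) ↑(Tfun S g q))⁻¹

/-- If the restriction of a 2-cocycle `ω` to a subgroup `S` is a coboundary, then
`ω ^ [G : S]` is a coboundary (explicit transfer argument). -/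
private lemma pow_index_coboundary [Finite G] (S : Subgroup G)
    (ω : G → G → Circle) (hω : IsCocycle2 ω) (α : S → Circle)
    (hα : ∀ s₁ s₂ : S, ω ↑s₁ ↑s₂ = α s₂ * (α (s₁ * s₂))⁻¹ * α s₁) :
    IsCoboundary2 (fun g₁ g₂ => ω g₁ g₂ ^ S.index) := by
  classical
  letI : Fintype (G ⧸ S) := Fintype.ofFinite _
  have perq : ∀ (g h : G) (q : G ⧸ S),
      ω g h = Ffun S ω α h q * (Ffun S ω α (g * h) q)⁻¹ * Ffun S ω α g (h • q) := by
    intro g h q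
    have e1 := Tfun_spec S h q
    have e2 := Tfun_spec S g (h • q)
    have h1 := hω g h q.out
    rw [e1] at h1
    have h2 := hω g ((h • q).out) ↑(Tfun S h q)
    rw [e2] at h2
    have h3 := hω ((g • (h • q)).out) ↑(Tfun S g (h • q)) ↑(Tfun S h q)
    have h4 := hα (Tfun S g (h • q)) (Tfun S h q)
    have hFh : Ffun S ω α h q
        = α (Tfun S h q) * ω h q.out * (ω ((h • q).out) ↑(Tfun S h q))⁻¹ := rfl
    have hFg : Ffun S ω α g (h • q)
        = α (Tfun S g (h • q)) * ω g (h • q).out *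
          (ω ((g • (h • q)).out) ↑(Tfun S g (h • q)))⁻¹ := rfl
    have hFgh : Ffun S ω α (g * h) q
        = α (Tfun S g (h • q) * Tfun S h q) * ω (g * h) q.out *
          (ω ((g • (h • q)).out) (↑(Tfun S g (h • q)) * ↑(Tfun S h q)))⁻¹ := by
      calc Ffun S ω α (g * h) q
          = α (Tfun S (g * h) q) * ω (g * h) q.out *
            (ω (((g * h) • q).out) ↑(Tfun S (g * h) q))⁻¹ := rfl
        _ = _ := by rw [Tfun_mul S g h q, mul_smul, Subgroup.coe_mul]
    rw [hFh, hFg, hFgh]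
    exact circle_aux h1 h2 h3 h4
  refine ⟨fun g => ∏ q : G ⧸ S, Ffun S ω α g q, ?_⟩
  intro g h
  have hcard : S.index = Fintype.card (G ⧸ S) := by
    have h0 : S.index = Nat.card (G ⧸ S) := rfl
    rw [h0, Nat.card_eq_fintype_card]
  calc ω g h ^ S.index = ∏ _q : G ⧸ S, ω g h := by
        rw [Finset.prod_const, Finset.card_univ, hcard]
    _ = ∏ q : G ⧸ S, (Ffun S ω α h q * (Ffun S ω α (g * h) q)⁻¹ * Ffun S ω α g (h • q)) :=
        Finset.prod_congr rfl fun q _ => perq g h q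
    _ = (∏ q : G ⧸ S, Ffun S ω α h q) * (∏ q : G ⧸ S, Ffun S ω α (g * h) q)⁻¹ *
          ∏ q : G ⧸ S, Ffun S ω α g (h • q) := by
        rw [Finset.prod_mul_distrib, Finset.prod_mul_distrib, Finset.prod_inv_distrib]
    _ = (∏ q : G ⧸ S, Ffun S ω α h q) * (∏ q : G ⧸ S, Ffun S ω α (g * h) q)⁻¹ *
          ∏ q : G ⧸ S, Ffun S ω α g q := by
        congr 1
        exact Fintype.prod_equiv (MulAction.toPerm h) (fun q => Ffun S ω α g (h • q))
          (Ffun S ω α g) (fun q => rfl)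

end StmtAux

open DT in
/-- restriction to a Sylow `p`-subgroup maps `Br²(G)` into `Br²(S)` and is
injective on the `p`-primary component of `Br²(G)`. -/
theorem stmt11 (G : Type*) [Group G] [Finite G] (p : ℕ) [Fact p.Prime] (P : Sylow p G) :
    (∀ x ∈ Br2Sub G, res2 (P : Subgroup G).subtype x ∈ Br2Sub ↥(P : Subgroup G)) ∧
    ∀ x ∈ Br2Sub G, (∃ k : ℕ, x ^ (p ^ k) = 1) →
      res2 (P : Subgroup G).subtype x = 1 → x = 1 := by
  classical
  set S : Subgroup G := (P : Subgroup G) with hS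
  have hlift : ∀ ω : cocycles2Sub G,
      res2 S.subtype (QuotientGroup.mk' ((coboundaries2Sub G).subgroupOf (cocycles2Sub G)) ω) =
        QuotientGroup.mk' ((coboundaries2Sub ↥S).subgroupOf (cocycles2Sub ↥S))
          (res2Cocycle S.subtype ω) := fun ω => rfl
  constructor
  · intro x hx
    obtain ⟨ω, hωmem, rfl⟩ := Subgroup.mem_map.mp hx
    obtain ⟨hc, hu⟩ := Subgroup.mem_subgroupOf.mp hωmem
    refine Subgroup.mem_map.mpr ⟨res2Cocycle S.subtype ω, ?_, (hlift ω).symm⟩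
    refine Subgroup.mem_subgroupOf.mpr ⟨(res2Cocycle S.subtype ω).2, ?_⟩
    intro a b hab
    have hab' : (a : G) * b = (b : G) * a := by
      have h := congrArg (Subtype.val) hab
      simpa using h
    exact hu ↑a ↑b hab'
  · intro x _ hpk hres
    obtain ⟨k, hk⟩ := hpk
    obtain ⟨ω, rfl⟩ := QuotientGroup.mk'_surjective
      ((coboundaries2Sub G).subgroupOf (cocycles2Sub G)) x
    -- extract the coboundary data on S from `hres`
    have hres' : QuotientGroup.mk' ((coboundaries2Sub ↥S).subgroupOf (cocycles2Sub ↥S))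
        (res2Cocycle S.subtype ω) = 1 := (hlift ω).symm.trans hres
    have hmem := Subgroup.mem_subgroupOf.mp ((QuotientGroup.eq_one_iff _).mp hres')
    obtain ⟨α, hα0⟩ := MonoidHom.mem_range.mp hmem
    have hα : ∀ s₁ s₂ : S, (ω : G → G → Circle) ↑s₁ ↑s₂ =
        α s₂ * (α (s₁ * s₂))⁻¹ * α s₁ := by
      intro s₁ s₂
      exact (congrFun (congrFun hα0 s₁) s₂).symm
    -- the transfer argument: `ω ^ S.index` is a coboundary
    obtain ⟨β, hβ⟩ := pow_index_coboundary S (ω : G → G → Circle) ω.2 α hα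
    set n : ℕ := S.index with hn
    set x := QuotientGroup.mk' ((coboundaries2Sub G).subgroupOf (cocycles2Sub G)) ω with hx
    have hxn : x ^ n = 1 := by
      rw [hx, ← map_pow]
      refine (QuotientGroup.eq_one_iff _).mpr ?_
      refine Subgroup.mem_subgroupOf.mpr ?_
      refine MonoidHom.mem_range.mpr ⟨β, ?_⟩
      funext a b
      have hco : ((ω ^ n : cocycles2Sub G) : G → G → Circle) a b
          = (ω : G → G → Circle) a b ^ n := by
        rw [SubmonoidClass.coe_pow]
        rfl
      rw [hco]
      exact (hβ a b).symm
    -- coprimality and Bézout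
    haveI : Finite (Sylow p G) := inferInstance
    haveI : S.FiniteIndex := ⟨Subgroup.index_ne_zero_of_finite⟩
    have hnd : ¬ p ∣ S.index := P.not_dvd_index
    have hcop : Nat.Coprime (p ^ k) n :=
      Nat.Coprime.pow_left k ((Nat.Prime.coprime_iff_not_dvd Fact.out).mpr hnd)
    have hb := Nat.gcd_eq_gcd_ab (p ^ k) n
    rw [hcop] at hb
    have hb' : (1 : ℤ) = (p ^ k : ℕ) * Nat.gcdA (p ^ k) n + (n : ℕ) * Nat.gcdB (p ^ k) n := by
      exact_mod_cast hb
    calc x = x ^ (1 : ℤ) := (zpow_one x).symm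
      _ = x ^ (((p ^ k : ℕ) : ℤ) * Nat.gcdA (p ^ k) n + ((n : ℕ) : ℤ) * Nat.gcdB (p ^ k) n) := by
          rw [← hb']
      _ = (x ^ ((p ^ k : ℕ) : ℤ)) ^ Nat.gcdA (p ^ k) n *
          (x ^ ((n : ℕ) : ℤ)) ^ Nat.gcdB (p ^ k) n := by
          rw [zpow_add, zpow_mul, zpow_mul]
      _ = 1 := by
          rw [zpow_natCast, zpow_natCast, show x ^ p ^ k = 1 from hk, hxn, one_zpow, one_zpow, one_mul]
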